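/- arXiv:math/0611159 — 5 statements merged into one kernel-verified Lean document; each statement's English description precedes it below -/
import Mathlib

section
/- The logarithmic Mahler measure of P(x,y) = −2y² + 2xy + 6y + 2x + 1 equals log(3 + √11). -/
open Complex Real MeasureTheory

/-- The dilogarithm `Li₂(z) = -∫₀¹ log(1 - z t)/t dt`. -/
noncomputable def Li2 (z : ℂ) : ℂ := -∫ t in (0:ℝ)..1, Complex.log (1 - z * t) / t

/-- The Bloch–Wigner dilogarithm `D(z) = Im(Li₂ z) + log|z| · arg(1 - z)`. -/
noncomputable def BW (z : ℂ) : ℝ := (Li2 z).im + Real.log ‖z‖ * Complex.arg (1 - z)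
/-- The logarithmic Mahler measure of a two-variable polynomial function:
`m(P) = (1/(2π)²) ∫₀^{2π} ∫₀^{2π} log|P(e^{iθ}, e^{iφ})| dθ dφ`. -/
noncomputable def mahler2 (P : ℂ → ℂ → ℂ) : ℝ :=
  (1 / (2 * Real.pi)^2) *
    ∫ θ in (0:ℝ)..(2 * Real.pi), ∫ φ in (0:ℝ)..(2 * Real.pi),
      Real.log ‖P (Complex.exp (θ * Complex.I)) (Complex.exp (φ * Complex.I))‖

section MahlerAux

open Set Metric

lemma L0 {c : ℂ} (hc : ‖c‖ < 1) :
    ∫ θ in (0:ℝ)..(2*Real.pi), Real.log (‖1 - c * Complex.exp (θ * Complex.I)‖) = 0 := by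
  set f : ℂ → ℂ := fun z => Complex.log (1 - c*z) with hf
  have hne : ∀ z : ℂ, ‖z‖ ≤ 1 → 0 < (1 - c*z).re := by
    intro z hz
    have h1 : ‖c*z‖ < 1 := by
      rw [norm_mul]
      nlinarith [norm_nonneg c, norm_nonneg z]
    have h2 : (c*z).re < 1 := lt_of_le_of_lt (Complex.re_le_norm _) h1
    rw [Complex.sub_re, Complex.one_re]; linarith
  have hdiff : ∀ z : ℂ, ‖z‖ ≤ 1 → DifferentiableAt ℂ f z := by
    intro z hz
    have : DifferentiableAt ℂ Complex.log (1 - c*z) :=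
      Complex.differentiableAt_log (Or.inl (hne z hz))
    exact this.comp (f := fun z => 1 - c*z) z (by fun_prop)
  have hdc : DiffContOnCl ℂ f (ball (0:ℂ) 1) := by
    constructor
    · intro z hz
      exact (hdiff z (le_of_lt (by simpa [Complex.dist_eq] using mem_ball_iff_norm.mp hz))).differentiableWithinAt
    · rw [closure_ball (0:ℂ) one_ne_zero]
      intro z hz
      exact (hdiff z (by simpa [Complex.dist_eq] using hz)).continuousAt.continuousWithinAt
  have hC := hdc.circleIntegral_sub_inv_smul (w := 0) (by simp)
  have hf0 : f 0 = 0 := by simp [hf]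
  rw [hf0, smul_zero] at hC
  have hunfold : (∮ z in C(0, 1), (z - 0)⁻¹ • f z)
      = Complex.I * ∫ θ in (0:ℝ)..(2*Real.pi), f (Complex.exp (θ*Complex.I)) := by
    rw [← intervalIntegral.integral_const_mul]
    simp only [circleIntegral, deriv_circleMap, circleMap, ofReal_one, one_mul, zero_add,
      smul_eq_mul, sub_zero]
    congr 1; funext θ
    have h := Complex.exp_ne_zero (θ*Complex.I)
    field_simp
  rw [hunfold] at hC
  have hJ : (∫ θ in (0:ℝ)..(2*Real.pi), f (Complex.exp (θ*Complex.I))) = 0 := by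
    have := mul_eq_zero.mp hC
    rcases this with h | h
    · exact absurd h Complex.I_ne_zero
    · exact h
  have hcont : Continuous fun θ : ℝ => f (Complex.exp (θ*Complex.I)) := by
    rw [continuous_iff_continuousAt]; intro θ
    have hg : ContinuousAt (fun θ:ℝ => Complex.exp (θ*Complex.I)) θ := by fun_prop
    exact ContinuousAt.comp (g := f)
      ((hdiff _ (le_of_eq (Complex.norm_exp_ofReal_mul_I θ))).continuousAt) hg
  have hre : (∫ θ in (0:ℝ)..(2*Real.pi), Real.log (‖1 - c * Complex.exp (θ * Complex.I)‖))
      = Complex.reCLM (∫ θ in (0:ℝ)..(2*Real.pi), f (Complex.exp (θ*Complex.I))) := by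
    rw [← ContinuousLinearMap.intervalIntegral_comp_comm Complex.reCLM
      (hcont.intervalIntegrable 0 (2*Real.pi))]
    congr 1
    funext θ
    simp only [Complex.reCLM_apply, hf]
    exact (Complex.log_re _).symm
  rw [hre, hJ, map_zero]

lemma one_sub_ne {c z : ℂ} (hc : ‖c‖ < 1) (hz : ‖z‖ = 1) :
    1 - c * z ≠ 0 := by
  intro h
  have h1 : c * z = 1 := by linear_combination -h
  have := congrArg (‖·‖) h1
  rw [norm_mul, hz, mul_one, norm_one] at this
  exact absurd this (ne_of_lt hc)

lemma cont0 {c : ℂ} (hc : ‖c‖ < 1) :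
    Continuous fun θ : ℝ => Real.log (‖1 - c * Complex.exp (θ * Complex.I)‖) := by
  rw [continuous_iff_continuousAt]
  intro θ
  have h1 : Continuous fun θ : ℝ => ‖1 - c * Complex.exp (θ * Complex.I)‖ :=
    continuous_norm.comp (by fun_prop)
  have hne : ‖1 - c * Complex.exp (θ * Complex.I)‖ ≠ 0 :=
    norm_ne_zero_iff.mpr (one_sub_ne hc (Complex.norm_exp_ofReal_mul_I θ))
  exact ContinuousAt.comp (g := Real.log) (Real.continuousAt_log hne) h1.continuousAt

lemma L1 {a b : ℂ} (h : ‖a‖ < ‖b‖) :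
    ∫ θ in (0:ℝ)..(2*Real.pi), Real.log (‖b + a * Complex.exp (θ*Complex.I)‖)
      = 2*Real.pi*Real.log (‖b‖) := by
  have hbpos : 0 < ‖b‖ := lt_of_le_of_lt (norm_nonneg a) h
  have hb : b ≠ 0 := by
    intro h0; rw [h0, norm_zero] at hbpos; exact lt_irrefl 0 hbpos
  have hc : ‖-(a/b)‖ < 1 := by
    rw [norm_neg, norm_div]
    exact (div_lt_one hbpos).mpr h
  have hpt : ∀ θ : ℝ, Real.log (‖b + a * Complex.exp (θ*Complex.I)‖)
      = Real.log (‖b‖)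
        + Real.log (‖1 - (-(a/b)) * Complex.exp (θ*Complex.I)‖) := by
    intro θ
    have hfac : b + a * Complex.exp (θ*Complex.I)
        = b * (1 - (-(a/b)) * Complex.exp (θ*Complex.I)) := by
      field_simp
      ring
    rw [hfac, norm_mul, Real.log_mul (norm_ne_zero_iff.mpr hb)
      (norm_ne_zero_iff.mpr (one_sub_ne hc (Complex.norm_exp_ofReal_mul_I θ)))]
  simp only [hpt]
  rw [intervalIntegral.integral_add intervalIntegrable_const
    ((cont0 hc).intervalIntegrable _ _), L0 hc, add_zero, intervalIntegral.integral_const]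
  simp only [smul_eq_mul, sub_zero]

lemma hab (y : ℂ) (hy : ‖y‖ = 1) :
    ‖2*y+2‖ < ‖-2*y^2+6*y+1‖ := by
  have h1 : y.re*y.re + y.im*y.im = 1 := by
    have h := Complex.sq_norm y
    rw [hy, one_pow] at h
    simpa [Complex.normSq_apply] using h.symm
  have hple : y.re ≤ 1 := by nlinarith
  have hpge : -1 ≤ y.re := by nlinarith
  apply lt_of_pow_lt_pow_left₀ 2 (norm_nonneg _)
  rw [Complex.sq_norm, Complex.sq_norm, Complex.normSq_apply, Complex.normSq_apply]
  simp only [Complex.add_re, Complex.add_im, Complex.mul_re, Complex.mul_im, Complex.neg_re,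
    Complex.neg_im, Complex.one_re, Complex.one_im, Complex.re_ofNat, Complex.im_ofNat, sq]
  nlinarith [sq_nonneg y.im, sq_nonneg (1 - y.re)]

lemma key2 :
    ∫ φ in (0:ℝ)..(2*Real.pi),
      Real.log (‖-2*Complex.exp (φ*Complex.I)^2 + 6*Complex.exp (φ*Complex.I) + 1‖)
      = 2*Real.pi * Real.log (3 + Real.sqrt 11) := by
  have h11 : Real.sqrt 11 ^ 2 = 11 := Real.sq_sqrt (by norm_num)
  have hsq0 : (0:ℝ) ≤ Real.sqrt 11 := Real.sqrt_nonneg 11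
  have h3 : 3 < Real.sqrt 11 := by nlinarith
  have h4 : Real.sqrt 11 < 4 := by nlinarith
  set r : ℝ := (3+Real.sqrt 11)/2 with hrdef
  set s : ℝ := (3-Real.sqrt 11)/2 with hsdef
  have hr1 : 1 < r := by rw [hrdef]; linarith
  have hr0 : 0 < r := by linarith
  have hs1 : |s| < 1 := by rw [abs_lt]; constructor <;> [skip; skip] <;> rw [hsdef] <;> linarith
  have e1 : (r:ℂ) + (s:ℂ) = 3 := by
    rw [hrdef, hsdef]; push_cast; ring
  have e2 : (r:ℂ) * (s:ℂ) = -1/2 := by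
    have : r * s = -1/2 := by rw [hrdef, hsdef]; nlinarith
    rw [← Complex.ofReal_mul, this]; push_cast; ring
  -- abs facts
  have hcr : ‖(r:ℂ)⁻¹‖ < 1 := by
    rw [norm_inv, Complex.norm_real, Real.norm_eq_abs, abs_of_pos hr0]
    exact inv_lt_one_of_one_lt₀ hr1
  have hcs : ‖(s:ℂ)‖ < 1 := by rw [Complex.norm_real, Real.norm_eq_abs]; exact hs1
  have hpt : ∀ φ : ℝ,
      Real.log (‖-2*Complex.exp (φ*Complex.I)^2 + 6*Complex.exp (φ*Complex.I) + 1‖)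
      = (Real.log 2 + Real.log r
          + Real.log (‖1 - ((r:ℂ))⁻¹ * Complex.exp (φ*Complex.I)‖))
        + Real.log (‖1 - ((s:ℂ)) * Complex.exp (φ*Complex.I)‖) := by
    intro φ
    set y := Complex.exp (φ*Complex.I) with hydef
    have hy : ‖y‖ = 1 := Complex.norm_exp_ofReal_mul_I φ
    have hyc : y * (starRingEnd ℂ) y = 1 := by
      rw [Complex.mul_conj]
      norm_cast
      rw [← Complex.sq_norm, hy, one_pow]
    have hfac : -2*y^2 + 6*y + 1 = -2 * (y - (r:ℂ)) * (y - (s:ℂ)) := by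
      linear_combination (-2*y)*e1 + 2*e2
    have hA : y - (r:ℂ) = (-(r:ℂ)) * (1 - ((r:ℂ))⁻¹ * y) := by
      have : (r:ℂ) ≠ 0 := by exact_mod_cast ne_of_gt hr0
      field_simp
      ring
    have hBval : ‖y - (s:ℂ)‖ = ‖1 - (s:ℂ) * y‖ := by
      have hB : y - (s:ℂ) = y * (1 - (s:ℂ) * (starRingEnd ℂ) y) := by
        have : y * (1 - (s:ℂ) * (starRingEnd ℂ) y)
            = y - (s:ℂ) * (y * (starRingEnd ℂ) y) := by ring
        rw [this, hyc, mul_one]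
      rw [hB, norm_mul, hy, one_mul, ← Complex.norm_conj]
      congr 1
      rw [map_sub, map_one, map_mul, Complex.conj_ofReal, Complex.conj_conj]
    have habs : ‖-2*y^2 + 6*y + 1‖
        = 2 * (r * ‖1 - ((r:ℂ))⁻¹ * y‖) * ‖1 - (s:ℂ) * y‖ := by
      rw [hfac, norm_mul, norm_mul, hA, norm_mul, ← hBval]
      have : ‖(-2 : ℂ)‖ = 2 := by
        rw [norm_neg]; simp
      rw [this]
      have : ‖-(r:ℂ)‖ = r := by
        rw [norm_neg, Complex.norm_real, Real.norm_eq_abs, abs_of_pos hr0]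
      rw [this]
    rw [habs]
    have hAne : ‖1 - ((r:ℂ))⁻¹ * y‖ ≠ 0 := by
      intro h
      have h0 : (1:ℂ) - ((r:ℂ))⁻¹ * y = 0 := norm_eq_zero.mp h
      have h1 : ((r:ℂ))⁻¹ * y = 1 := by linear_combination -h0
      have := congrArg (‖·‖) h1
      rw [norm_mul, hy, mul_one, norm_one] at this
      exact absurd this (ne_of_lt hcr)
    have hBne : ‖1 - ((s:ℂ)) * y‖ ≠ 0 := by
      intro h
      have h0 : (1:ℂ) - (s:ℂ) * y = 0 := norm_eq_zero.mp h
      have h1 : (s:ℂ) * y = 1 := by linear_combination -h0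
      have := congrArg (‖·‖) h1
      rw [norm_mul, hy, mul_one, norm_one] at this
      exact absurd this (ne_of_lt hcs)
    rw [Real.log_mul (mul_ne_zero (by norm_num) (mul_ne_zero (ne_of_gt hr0) hAne)) hBne,
      Real.log_mul (by norm_num : (2:ℝ) ≠ 0) (mul_ne_zero (ne_of_gt hr0) hAne),
      Real.log_mul (ne_of_gt hr0) hAne]
    ring
  simp only [hpt]
  rw [intervalIntegral.integral_add (((intervalIntegrable_const).add
      (((cont0 hcr).intervalIntegrable _ _))))
      ((cont0 hcs).intervalIntegrable _ _),
    intervalIntegral.integral_add intervalIntegrable_const ((cont0 hcr).intervalIntegrable _ _),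
    L0 hcr, L0 hcs, add_zero, add_zero, intervalIntegral.integral_const]
  have h2r : 2 * r = 3 + Real.sqrt 11 := by rw [hrdef]; ring
  rw [← Real.log_mul (by norm_num) (ne_of_gt hr0), h2r]
  simp only [smul_eq_mul, sub_zero]

lemma key1 (y : ℂ) (hy : ‖y‖ = 1) :
    ∫ θ in (0:ℝ)..(2*Real.pi),
      Real.log (‖-2*y^2 + 2*Complex.exp (θ*Complex.I)*y + 6*y
        + 2*Complex.exp (θ*Complex.I) + 1‖)
      = 2*Real.pi * Real.log (‖-2*y^2+6*y+1‖) := by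
  have hpt : ∀ θ : ℝ, -2*y^2 + 2*Complex.exp (θ*Complex.I)*y + 6*y
        + 2*Complex.exp (θ*Complex.I) + 1
      = (-2*y^2+6*y+1) + (2*y+2) * Complex.exp (θ*Complex.I) := fun θ => by ring
  simp only [hpt]
  exact L1 (hab y hy)

-- continuity of the full integrand
lemma gne (θ φ : ℝ) :
    -2*Complex.exp (φ*Complex.I)^2 + 2*Complex.exp (θ*Complex.I)*Complex.exp (φ*Complex.I)
      + 6*Complex.exp (φ*Complex.I) + 2*Complex.exp (θ*Complex.I) + 1 ≠ 0 := by
  intro h0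
  set x := Complex.exp (θ*Complex.I) with hxd
  set y := Complex.exp (φ*Complex.I) with hyd
  have hx : ‖x‖ = 1 := Complex.norm_exp_ofReal_mul_I θ
  have hy : ‖y‖ = 1 := Complex.norm_exp_ofReal_mul_I φ
  have h := hab y hy
  have he : -2*y^2+6*y+1 = -((2*y+2)*x) := by linear_combination h0
  have := congrArg (‖·‖) he
  rw [norm_neg, norm_mul, hx, mul_one] at this
  rw [this] at h
  exact lt_irrefl _ h

lemma hcontmain : Continuous (fun p : ℝ × ℝ =>
    Real.log (‖-2*Complex.exp (p.2*Complex.I)^2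
      + 2*Complex.exp (p.1*Complex.I)*Complex.exp (p.2*Complex.I)
      + 6*Complex.exp (p.2*Complex.I) + 2*Complex.exp (p.1*Complex.I) + 1‖)) := by
  have hg : Continuous (fun p : ℝ × ℝ => ‖-2*Complex.exp (p.2*Complex.I)^2
      + 2*Complex.exp (p.1*Complex.I)*Complex.exp (p.2*Complex.I)
      + 6*Complex.exp (p.2*Complex.I) + 2*Complex.exp (p.1*Complex.I) + 1‖) :=
    continuous_norm.comp (by fun_prop)
  rw [continuous_iff_continuousAt]
  intro p
  exact ContinuousAt.comp (g := Real.log)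
    (Real.continuousAt_log (norm_ne_zero_iff.mpr (gne p.1 p.2))) hg.continuousAt

end MahlerAux

section Main
open Set Metric

theorem stmt_9 :
    mahler2 (fun x y => -2 * y^2 + 2 * x * y + 6 * y + 2 * x + 1)
      = Real.log (3 + Real.sqrt 11) := by
  have h2pi : (0:ℝ) ≤ 2*Real.pi := by positivity
  unfold mahler2
  simp only []
  set f : ℝ → ℝ → ℝ := fun θ φ =>
    Real.log (‖-2*Complex.exp (φ*Complex.I)^2
      + 2*Complex.exp (θ*Complex.I)*Complex.exp (φ*Complex.I)
      + 6*Complex.exp (φ*Complex.I) + 2*Complex.exp (θ*Complex.I) + 1‖) with hfdef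
  have hshape : (∫ θ in (0:ℝ)..(2*Real.pi), ∫ φ in (0:ℝ)..(2*Real.pi),
      Real.log (‖-2 * Complex.exp (φ*Complex.I)^2
        + 2 * Complex.exp (θ*Complex.I) * Complex.exp (φ*Complex.I)
        + 6 * Complex.exp (φ*Complex.I) + 2 * Complex.exp (θ*Complex.I) + 1‖))
      = ∫ θ in (0:ℝ)..(2*Real.pi), ∫ φ in (0:ℝ)..(2*Real.pi), f θ φ := rfl
  rw [hshape]
  have hint : IntegrableOn (Function.uncurry f)
      ((Ioc (0:ℝ) (2*Real.pi)) ×ˢ (Ioc (0:ℝ) (2*Real.pi))) (volume.prod volume) := by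
    apply ((hcontmain.continuousOn.integrableOn_compact (isCompact_Icc.prod isCompact_Icc)).mono_set
      (prod_mono Ioc_subset_Icc_self Ioc_subset_Icc_self))
  have hswap : (∫ θ in (0:ℝ)..(2*Real.pi), ∫ φ in (0:ℝ)..(2*Real.pi), f θ φ)
      = ∫ φ in (0:ℝ)..(2*Real.pi), ∫ θ in (0:ℝ)..(2*Real.pi), f θ φ := by
    rw [intervalIntegral.integral_of_le h2pi, intervalIntegral.integral_of_le h2pi]
    simp_rw [intervalIntegral.integral_of_le h2pi]
    apply MeasureTheory.integral_integral_swap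
    rwa [Measure.prod_restrict]
  rw [hswap]
  have hin : ∀ φ : ℝ, (∫ θ in (0:ℝ)..(2*Real.pi), f θ φ)
      = 2*Real.pi * Real.log (‖-2*Complex.exp (φ*Complex.I)^2
          + 6*Complex.exp (φ*Complex.I) + 1‖) :=
    fun φ => key1 (Complex.exp (φ*Complex.I)) (Complex.norm_exp_ofReal_mul_I φ)
  simp_rw [hin]
  rw [intervalIntegral.integral_const_mul, key2]
  have hpi : Real.pi ≠ 0 := Real.pi_ne_zero
  field_simp

end Main
end

section
/- Let P(x,y) = x + y − 4xy + x²y + xy². Then f(t) = ((t−1)(t−i))/((t+1)(t+i)) and g(t) = ((t−1)(t+i))/((t+1)(t−i)) satisfy P(f(t), g(t)) = 0 identically as rational functions of t. -/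
theorem stmt_12 (P : ℂ → ℂ → ℂ)
    (hP : ∀ x y : ℂ, P x y = x + y - 4 * x * y + x^2 * y + x * y^2) :
    ∀ t : ℂ, t + 1 ≠ 0 → t + Complex.I ≠ 0 → t - Complex.I ≠ 0 →
      P (((t - 1) * (t - Complex.I)) / ((t + 1) * (t + Complex.I)))
        (((t - 1) * (t + Complex.I)) / ((t + 1) * (t - Complex.I))) = 0 := by
  intro t h1 h2 h3
  rw [hP]
  have h4 : Complex.I ^ 4 = 1 := by
    rw [show (4:ℕ) = 2*2 from rfl, pow_mul, Complex.I_sq]; ring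
  have h6 : Complex.I ^ 6 = -1 := by
    rw [show (6:ℕ) = 2*3 from rfl, pow_mul, Complex.I_sq]; ring
  have h8 : Complex.I ^ 8 = 1 := by
    rw [show (8:ℕ) = 2*4 from rfl, pow_mul, Complex.I_sq]; ring
  field_simp
  ring_nf
  rw [Complex.I_sq]
  ring
end

section
/- The logarithmic Mahler measure of P(x,y) = x + y − 4xy + x²y + xy² satisfies π·m(P) = 4·D(i), where D is the Bloch–Wigner dilogarithm and i the imaginary unit. -/
open Complex Real MeasureTheory

section Aux

open intervalIntegral Set Filter

noncomputable def gfun (c : ℝ) (φ : ℝ) : ℝ :=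
  Real.log (‖1 - (c:ℂ) * Complex.exp ((φ:ℂ) * Complex.I)‖)

lemma gfun_ne {c : ℝ} (hc : |c| < 1) (φ : ℝ) :
    (1 : ℂ) - (c:ℂ) * Complex.exp ((φ:ℂ) * Complex.I) ≠ 0 := by
  have h2 : ‖(c:ℂ) * Complex.exp ((φ:ℂ) * Complex.I)‖ = |c| := by
    rw [norm_mul, Complex.norm_exp_ofReal_mul_I, Complex.norm_real, Real.norm_eq_abs, mul_one]
  intro h
  have h1 : (c:ℂ) * Complex.exp ((φ:ℂ) * Complex.I) = 1 := by linear_combination -h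
  rw [h1, norm_one] at h2
  rw [← h2] at hc
  exact lt_irrefl _ hc

lemma gfun_cont {c : ℝ} (hc : |c| < 1) : Continuous (gfun c) := by
  apply Continuous.log
  · exact continuous_norm.comp (by continuity)
  · intro x
    exact norm_ne_zero_iff.mpr (gfun_ne hc x)

lemma gfun_periodic (c : ℝ) : Function.Periodic (gfun c) (2 * π) := by
  intro x
  unfold gfun
  congr 2
  push_cast
  rw [add_mul, Complex.exp_add, Complex.exp_two_pi_mul_I, mul_one]

lemma gfun_intervalIntegrable {c : ℝ} (hc : |c| < 1) (a b : ℝ) :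
    IntervalIntegrable (gfun c) volume a b :=
  (gfun_cont hc).intervalIntegrable a b

noncomputable def Fc (c : ℝ) : ℝ := ∫ φ in (0:ℝ)..(2*π), gfun c φ

lemma Fc_shift {c : ℝ} (hc : |c| < 1) :
    (∫ φ in (0:ℝ)..(2*π), gfun c (φ + π)) = Fc c := by
  rw [intervalIntegral.integral_comp_add_right (fun x => gfun c x) π]
  have := (gfun_periodic c).intervalIntegral_add_eq π 0
  rw [zero_add] at this
  rw [zero_add, show (2*π + π) = π + 2*π by ring, this]; rfl

lemma Fc_double {c : ℝ} (hc : |c| < 1) :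
    (∫ φ in (0:ℝ)..(2*π), gfun c (2*φ)) = Fc c := by
  rw [intervalIntegral.integral_comp_mul_left (fun x => gfun c x) (two_ne_zero)]
  have h1 : (∫ φ in (2*0:ℝ)..(2*(2*π)), gfun c φ)
      = (∫ φ in (0:ℝ)..(2*π), gfun c φ) + ∫ φ in (2*π:ℝ)..(2*(2*π)), gfun c φ := by
    rw [mul_zero]
    exact (integral_add_adjacent_intervals (gfun_intervalIntegrable hc _ _)
      (gfun_intervalIntegrable hc _ _)).symm
  have h2 : (∫ φ in (2*π:ℝ)..(2*(2*π)), gfun c φ) = Fc c := by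
    have := (gfun_periodic c).intervalIntegral_add_eq (2*π) 0
    rw [zero_add] at this
    rw [show (2*(2*π):ℝ) = 2*π + 2*π by ring, this]; rfl
  rw [h1, h2]
  unfold Fc
  simp only [smul_eq_mul]
  ring

lemma gfun_double_pt {c : ℝ} (hc : |c| < 1) (φ : ℝ) :
    gfun c φ + gfun c (φ + π) = gfun (c^2) (2*φ) := by
  have he : Complex.exp (((φ:ℝ)+π : ℝ) * Complex.I) = - Complex.exp ((φ:ℂ) * Complex.I) := by
    push_cast
    rw [add_mul, Complex.exp_add, Complex.exp_pi_mul_I]; ring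
  have he2 : Complex.exp (((2*φ:ℝ):ℂ) * Complex.I)
      = Complex.exp ((φ:ℂ) * Complex.I) * Complex.exp ((φ:ℂ) * Complex.I) := by
    rw [← Complex.exp_add]; push_cast; ring_nf
  have hprod : (1 - (c:ℂ) * Complex.exp ((φ:ℂ) * Complex.I))
      * (1 - (c:ℂ) * Complex.exp ((((φ:ℝ)+π : ℝ):ℂ) * Complex.I))
      = 1 - ((c^2:ℝ):ℂ) * Complex.exp (((2*φ:ℝ):ℂ) * Complex.I) := by
    rw [he, he2]; push_cast; ring
  unfold gfun
  rw [← Real.log_mul (norm_ne_zero_iff.mpr (gfun_ne hc φ))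
    (norm_ne_zero_iff.mpr (gfun_ne hc (φ+π))), ← norm_mul, hprod]

lemma Fc_sq {c : ℝ} (hc : |c| < 1) : Fc (c^2) = 2 * Fc c := by
  have hint1 : IntervalIntegrable (fun φ => gfun c (φ + π)) volume 0 (2*π) :=
    ((gfun_cont hc).comp (by continuity)).intervalIntegrable _ _
  have h : (∫ φ in (0:ℝ)..(2*π), (gfun c φ + gfun c (φ + π)))
      = ∫ φ in (0:ℝ)..(2*π), gfun (c^2) (2*φ) := by
    apply intervalIntegral.integral_congr
    intro x _
    exact gfun_double_pt hc x
  rw [intervalIntegral.integral_add (gfun_intervalIntegrable hc _ _) hint1] at h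
  have hc2 : |c^2| < 1 := by
    rw [_root_.abs_pow]
    calc |c|^2 ≤ |c| := by nlinarith [abs_nonneg c]
    _ < 1 := hc
  rw [Fc_shift hc, Fc_double hc2] at h
  rw [← h]; unfold Fc; ring

lemma Fc_bound {c : ℝ} (h0 : 0 ≤ c) (hc : c < 1) :
    |Fc c| ≤ 2 * π * (-Real.log (1 - c)) := by
  have habs : |c| < 1 := by rwa [_root_.abs_of_nonneg h0]
  have key : ∀ φ ∈ Set.uIoc (0:ℝ) (2*π), ‖gfun c φ‖ ≤ -Real.log (1 - c) := by
    intro φ _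
    have hub : ‖1 - (c:ℂ) * Complex.exp ((φ:ℂ) * Complex.I)‖ ≤ 1 + c := by
      calc ‖1 - (c:ℂ) * Complex.exp ((φ:ℂ) * Complex.I)‖
          ≤ ‖(1:ℂ)‖ + ‖(c:ℂ) * Complex.exp ((φ:ℂ) * Complex.I)‖ :=
            norm_sub_le _ _
        _ = 1 + c := by
            rw [norm_one, norm_mul, Complex.norm_exp_ofReal_mul_I, Complex.norm_real, Real.norm_eq_abs, mul_one,
              _root_.abs_of_nonneg h0]
    have hlb : 1 - c ≤ ‖1 - (c:ℂ) * Complex.exp ((φ:ℂ) * Complex.I)‖ := by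
      have := norm_sub_norm_le (1:ℂ) ((c:ℂ) * Complex.exp ((φ:ℂ) * Complex.I))
      rw [norm_one, norm_mul,
        Complex.norm_exp_ofReal_mul_I, Complex.norm_real, Real.norm_eq_abs, mul_one, _root_.abs_of_nonneg h0] at this
      exact this
    rw [Real.norm_eq_abs, abs_le]
    constructor
    · rw [neg_neg]
      exact Real.log_le_log (by linarith) hlb
    · calc gfun c φ ≤ Real.log (1 + c) := Real.log_le_log (lt_of_lt_of_le (by linarith) hlb) hub
        _ ≤ -Real.log (1 - c) := by
          have hs : Real.log (1 + c) + Real.log (1 - c) ≤ 0 := by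
            rw [← Real.log_mul (by linarith) (by linarith)]
            apply Real.log_nonpos <;> nlinarith
          linarith
  have := intervalIntegral.norm_integral_le_of_norm_le_const key
  rw [Real.norm_eq_abs] at this
  calc |Fc c| ≤ (-Real.log (1-c)) * |2*π - 0| := this
    _ = 2 * π * (-Real.log (1 - c)) := by
        rw [sub_zero, _root_.abs_of_nonneg (by positivity : (0:ℝ) ≤ 2*π)]; ring

lemma Fc_zero {c : ℝ} (h0 : 0 ≤ c) (hc : c < 1) : Fc c = 0 := by
  have hFn : ∀ n : ℕ, Fc (c^(2^n)) = 2^n * Fc c := by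
    intro n
    induction n with
    | zero => simp
    | succ n ih =>
      have habs : |c ^ 2 ^ n| < 1 := by
        rw [_root_.abs_of_nonneg (pow_nonneg h0 _)]
        exact pow_lt_one₀ h0 hc (by positivity)
      have : c ^ 2 ^ (n+1) = (c ^ 2 ^ n)^2 := by rw [← pow_mul, pow_succ]
      rw [this, Fc_sq habs, ih]; ring
  have hb : ∀ n : ℕ, |Fc c| ≤ (2 * π * (-Real.log (1 - c))) * (1/2)^n := by
    intro n
    have hcn0 : (0:ℝ) ≤ c ^ 2^n := pow_nonneg h0 _
    have hcn1 : c ^ 2^n < 1 := pow_lt_one₀ h0 hc (by positivity)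
    have hle : c ^ 2^n ≤ c := pow_le_of_le_one h0 hc.le (by positivity)
    have h1 := Fc_bound hcn0 hcn1
    rw [hFn n] at h1
    have hmono : -Real.log (1 - c^2^n) ≤ -Real.log (1 - c) := by
      have := Real.log_le_log (by linarith) (show (1:ℝ) - c ≤ 1 - c^2^n by linarith)
      linarith
    rw [abs_mul, _root_.abs_pow] at h1
    have h2n : |(2:ℝ)|^n = 2^n := by norm_num
    rw [h2n] at h1
    have : (2:ℝ)^n * |Fc c| ≤ 2 * π * (-Real.log (1 - c)) := by
      calc (2:ℝ)^n * |Fc c| ≤ 2*π*(-Real.log (1 - c^2^n)) := h1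
        _ ≤ 2*π*(-Real.log (1-c)) := by nlinarith [Real.pi_pos]
    calc |Fc c| = ((2:ℝ)^n * |Fc c|) * (1/2)^n := by
          rw [mul_comm ((2:ℝ)^n) _, mul_assoc, ← mul_pow]; norm_num
      _ ≤ (2 * π * (-Real.log (1 - c))) * (1/2)^n := by
          apply mul_le_mul_of_nonneg_right this (by positivity)
  have htend : Tendsto (fun n : ℕ => (2 * π * (-Real.log (1 - c))) * (1/2)^n) atTop (nhds 0) := by
    rw [show (0:ℝ) = (2 * π * (-Real.log (1 - c))) * 0 by ring]
    exact Tendsto.const_mul _ (tendsto_pow_atTop_nhds_zero_of_lt_one (by norm_num) (by norm_num))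
  have := ge_of_tendsto' htend hb
  have := abs_nonneg (Fc c)
  have : |Fc c| = 0 := le_antisymm (by linarith) (by linarith)
  exact abs_eq_zero.mp this

lemma Fc_zero' {c : ℝ} (h0 : 0 ≤ c) (hc : c < 1) :
    (∫ φ in (0:ℝ)..(2*π), gfun c φ) = 0 := Fc_zero h0 hc

lemma abs_P (θ φ : ℝ) :
    ‖(fun x y => x + y - 4 * x * y + x^2 * y + x * y^2)
      (Complex.exp ((θ:ℂ) * Complex.I)) (Complex.exp ((φ:ℂ) * Complex.I))‖
      = 4 - 2 * Real.cos θ - 2 * Real.cos φ := by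
  set x := Complex.exp ((θ:ℂ) * Complex.I) with hxdef
  set y := Complex.exp ((φ:ℂ) * Complex.I) with hydef
  have hx : x = Complex.cos θ + Complex.sin θ * Complex.I := by
    rw [hxdef, Complex.exp_mul_I]
  have hy : y = Complex.cos φ + Complex.sin φ * Complex.I := by
    rw [hydef, Complex.exp_mul_I]
  have hpyθ : Complex.sin (θ:ℂ)^2 + Complex.cos (θ:ℂ)^2 = 1 := Complex.sin_sq_add_cos_sq _
  have hpyφ : Complex.sin (φ:ℂ)^2 + Complex.cos (φ:ℂ)^2 = 1 := Complex.sin_sq_add_cos_sq _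
  have hI : (Complex.I)^2 = -1 := Complex.I_sq
  have key : x + y - 4 * x * y + x^2 * y + x * y^2
      = x * y * ((2 * Real.cos θ + 2 * Real.cos φ - 4 : ℝ) : ℂ) := by
    rw [hx, hy]
    push_cast
    linear_combination
      ((Complex.cos (φ:ℂ) + Complex.sin (φ:ℂ) * Complex.I) * Complex.sin (θ:ℂ)^2
        + (Complex.cos (θ:ℂ) + Complex.sin (θ:ℂ) * Complex.I) * Complex.sin (φ:ℂ)^2) * hI
      - (Complex.cos (φ:ℂ) + Complex.sin (φ:ℂ) * Complex.I) * hpyθ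
      - (Complex.cos (θ:ℂ) + Complex.sin (θ:ℂ) * Complex.I) * hpyφ
  show ‖x + y - 4 * x * y + x^2 * y + x * y^2‖ = _
  rw [key, norm_mul, norm_mul]
  rw [hxdef, hydef, Complex.norm_exp_ofReal_mul_I, Complex.norm_exp_ofReal_mul_I,
    Complex.norm_real, Real.norm_eq_abs]
  have h1 : Real.cos θ ≤ 1 := Real.cos_le_one θ
  have h2 : Real.cos φ ≤ 1 := Real.cos_le_one φ
  rw [abs_of_nonpos (by linarith)]
  ring

lemma inner_integral {θ : ℝ} (hθ : θ ∈ Set.Ioo 0 (2*π)) :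
    (∫ φ in (0:ℝ)..(2*π), Real.log (‖(fun x y => x + y - 4 * x * y + x^2 * y + x * y^2)
        (Complex.exp ((θ:ℂ) * Complex.I)) (Complex.exp ((φ:ℂ) * Complex.I))‖))
      = 4 * π * Real.arsinh (Real.sin (θ/2)) := by
  obtain ⟨h0, h2⟩ := hθ
  set s := Real.sin (θ/2) with hsdef
  have hs : 0 < s := Real.sin_pos_of_pos_of_lt_pi (by linarith) (by linarith)
  set v := Real.sqrt (1 + s^2) with hvdef
  have hv2 : v^2 = 1 + s^2 := Real.sq_sqrt (by positivity)
  have hv0 : 0 < v := Real.sqrt_pos.mpr (by positivity)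
  have hsv : s < v := by nlinarith
  set c := (v - s)^2 with hcdef
  set r := (s + v)^2 with hrdef
  have hc0 : 0 ≤ c := sq_nonneg _
  have hc1 : c < 1 := by
    have : v < 1 + s := by nlinarith
    have h' : v - s < 1 := by linarith
    nlinarith
  have hrc : r * c = 1 := by
    have : r * c = (v^2 - s^2)^2 := by rw [hrdef, hcdef]; ring
    rw [this, hv2]; ring
  have hr1 : 1 < r := by nlinarith
  have hcos : Real.cos θ = 1 - 2 * s^2 := by
    have h := Real.cos_two_mul' (θ/2)
    rw [show 2 * (θ/2) = θ by ring] at h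
    have := Real.sin_sq_add_cos_sq (θ/2)
    rw [h, ← hsdef]; linarith
  -- pointwise identity
  have hpt : ∀ φ : ℝ, Real.log (‖(fun x y => x + y - 4 * x * y + x^2 * y + x * y^2)
        (Complex.exp ((θ:ℂ) * Complex.I)) (Complex.exp ((φ:ℂ) * Complex.I))‖)
      = Real.log r + 2 * gfun c φ := by
    intro φ
    rw [abs_P θ φ]
    have hA0 : (0:ℝ) < ‖1 - (c:ℝ) * Complex.exp ((φ:ℂ) * Complex.I)‖ := by
      have hne : (1:ℂ) - (c:ℝ) * Complex.exp ((φ:ℂ) * Complex.I) ≠ 0 := by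
        intro h
        have h2 : ‖(c:ℂ) * Complex.exp ((φ:ℂ) * Complex.I)‖ = |c| := by
          rw [norm_mul, Complex.norm_exp_ofReal_mul_I, Complex.norm_real, Real.norm_eq_abs, mul_one]
        have h1 : (c:ℂ) * Complex.exp ((φ:ℂ)*Complex.I) = 1 := by linear_combination -h
        rw [h1, norm_one] at h2
        rw [_root_.abs_of_nonneg hc0] at h2
        rw [← h2] at hc1; exact lt_irrefl _ hc1
      exact (norm_pos_iff.mpr hne)
    have hsq : (‖1 - (c:ℝ) * Complex.exp ((φ:ℂ) * Complex.I)‖)^2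
        = 1 - 2*c*Real.cos φ + c^2 := by
      rw [Complex.sq_norm, Complex.normSq_apply]
      simp only [Complex.sub_re, Complex.sub_im, Complex.one_re, Complex.one_im,
        Complex.mul_re, Complex.mul_im, Complex.ofReal_re, Complex.ofReal_im,
        Complex.exp_ofReal_mul_I_re, Complex.exp_ofReal_mul_I_im]
      have := Real.sin_sq_add_cos_sq φ
      nlinarith [this]
    have hval : 4 - 2*Real.cos θ - 2*Real.cos φ
        = r * (‖1 - (c:ℝ) * Complex.exp ((φ:ℂ) * Complex.I)‖)^2 := by
      rw [hsq]
      have expand : r * (1 - 2*c*Real.cos φ + c^2) = r + c - 2*Real.cos φ := by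
        have h' : r * (1 - 2*c*Real.cos φ + c^2) = r - 2*(r*c)*Real.cos φ + (r*c)*c := by ring
        rw [h', hrc]; ring
      have hrpc : r + c = 2 + 4*s^2 := by rw [hrdef, hcdef]; nlinarith
      rw [expand]; linarith
    have e1 : Real.log (4 - 2*Real.cos θ - 2*Real.cos φ)
        = Real.log r + Real.log ((‖1 - (c:ℝ) * Complex.exp ((φ:ℂ) * Complex.I)‖)^2) := by
      rw [hval]; exact Real.log_mul (by positivity) (by positivity)
    have e2 : Real.log ((‖1 - (c:ℝ) * Complex.exp ((φ:ℂ) * Complex.I)‖)^2)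
        = 2 * gfun c φ := by
      rw [Real.log_pow]; unfold gfun; norm_num
    rw [e1, e2]
  rw [intervalIntegral.integral_congr (fun φ _ => hpt φ)]
  have habsc : |c| < 1 := by rwa [_root_.abs_of_nonneg hc0]
  rw [intervalIntegral.integral_add (g := fun φ => 2 * gfun c φ) (intervalIntegrable_const)
    ((continuous_const.mul (gfun_cont habsc)).intervalIntegrable _ _)]
  have : (∫ φ in (0:ℝ)..(2*π), 2 * gfun c φ) = 2 * ∫ φ in (0:ℝ)..(2*π), gfun c φ := by
    rw [intervalIntegral.integral_const_mul]
  rw [this, Fc_zero' hc0 hc1, intervalIntegral.integral_const]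
  have hars : Real.arsinh s = Real.log (s + v) := by rw [hvdef]; rfl
  have hlogr : Real.log r = 2 * Real.arsinh s := by
    rw [hrdef, Real.log_pow, hars]; norm_num
  rw [hlogr]
  simp only [smul_eq_mul, sub_zero, mul_zero, add_zero]
  ring
lemma outer_eval :
    Real.pi * mahler2 (fun x y => x + y - 4 * x * y + x^2 * y + x * y^2)
      = ∫ θ in (0:ℝ)..(2*π), Real.arsinh (Real.sin (θ/2)) := by
  have hcong : (∫ θ in (0:ℝ)..(2 * π), ∫ φ in (0:ℝ)..(2 * π),
      Real.log (‖(fun x y => x + y - 4 * x * y + x^2 * y + x * y^2)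
        (Complex.exp ((θ:ℂ) * Complex.I)) (Complex.exp ((φ:ℂ) * Complex.I))‖))
      = ∫ θ in (0:ℝ)..(2*π), 4 * π * Real.arsinh (Real.sin (θ/2)) := by
    apply intervalIntegral.integral_congr_ae
    have hne : ∀ᵐ (x:ℝ), x ≠ 2*π := by
      refine compl_mem_ae_iff.2 ?_
      exact measure_singleton (2*π : ℝ)
    filter_upwards [hne] with θ hθne hθmem
    have hθ : θ ∈ Set.Ioo 0 (2*π) := by
      rw [Set.uIoc_of_le (by positivity : (0:ℝ) ≤ 2*π)] at hθmem
      exact ⟨hθmem.1, lt_of_le_of_ne hθmem.2 hθne⟩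
    exact inner_integral hθ
  unfold mahler2
  rw [hcong, intervalIntegral.integral_const_mul]
  have hπ : Real.pi ≠ 0 := Real.pi_ne_zero
  field_simp
  ring
lemma J_eq :
    (∫ θ in (0:ℝ)..(2*π), Real.arsinh (Real.sin (θ/2)))
      = 4 * ∫ u in (0:ℝ)..(π/2), Real.arsinh (Real.sin u) := by
  have h1 : (∫ θ in (0:ℝ)..(2*π), Real.arsinh (Real.sin (θ/2)))
      = 2 * ∫ u in (0:ℝ)..π, Real.arsinh (Real.sin u) := by
    rw [intervalIntegral.integral_comp_div (fun u => Real.arsinh (Real.sin u))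
      (two_ne_zero)]
    norm_num
  have hint : ∀ a b : ℝ, IntervalIntegrable (fun u => Real.arsinh (Real.sin u)) volume a b :=
    fun a b => (Real.continuous_arsinh.comp Real.continuous_sin).intervalIntegrable a b
  have h2 : (∫ u in (0:ℝ)..π, Real.arsinh (Real.sin u))
      = (∫ u in (0:ℝ)..(π/2), Real.arsinh (Real.sin u))
        + ∫ u in (π/2:ℝ)..π, Real.arsinh (Real.sin u) :=
    (intervalIntegral.integral_add_adjacent_intervals (hint _ _) (hint _ _)).symm
  have h3 : (∫ u in (π/2:ℝ)..π, Real.arsinh (Real.sin u))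
      = ∫ u in (0:ℝ)..(π/2), Real.arsinh (Real.sin u) := by
    have := intervalIntegral.integral_comp_sub_left
      (a := 0) (b := π/2) (fun u => Real.arsinh (Real.sin u)) π
    simp only [sub_zero] at this
    rw [show (π - π/2 : ℝ) = π/2 by ring] at this
    rw [← this]
    apply intervalIntegral.integral_congr
    intro x _
    simp [Real.sin_pi_sub]
  rw [h1, h2, h3]; ring
lemma rep_arsinh (s : ℝ) :
    (∫ t in (0:ℝ)..1, s / Real.sqrt (1 + s^2 * t^2)) = Real.arsinh s := by
  have hderiv : ∀ t ∈ Set.uIcc (0:ℝ) 1,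
      HasDerivAt (fun t => Real.arsinh (s * t)) (s / Real.sqrt (1 + s^2 * t^2)) t := by
    intro t _
    have h1 : HasDerivAt (fun t : ℝ => s * t) s t := by
      simpa using (hasDerivAt_id t).const_mul s
    have h2 := (Real.hasDerivAt_arsinh (s*t)).comp t h1
    refine h2.congr_deriv ?_
    rw [show (s*t)^2 = s^2 * t^2 by ring]
    field_simp
  have hcont : Continuous (fun t : ℝ => s / Real.sqrt (1 + s^2 * t^2)) := by
    apply continuous_const.div
    · exact Real.continuous_sqrt.comp (by continuity)
    · intro t
      exact (Real.sqrt_pos.mpr (by positivity)).ne'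
  rw [intervalIntegral.integral_eq_sub_of_hasDerivAt hderiv (hcont.intervalIntegrable _ _)]
  simp

lemma rep_arctan {t : ℝ} (ht : 0 < t) :
    (∫ u in (0:ℝ)..(π/2), Real.sin u / Real.sqrt (1 + t^2 * Real.sin u^2))
      = Real.arctan t / t := by
  set A := Real.sqrt (1 + t^2) with hAdef
  have hA2 : A^2 = 1 + t^2 := Real.sq_sqrt (by positivity)
  have hA0 : 0 < A := Real.sqrt_pos.mpr (by positivity)
  have hAt : t < A := by nlinarith
  have hderiv : ∀ u ∈ Set.uIcc (0:ℝ) (π/2),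
      HasDerivAt (fun u => -(1/t) * Real.arcsin (t * Real.cos u / A))
        (Real.sin u / Real.sqrt (1 + t^2 * Real.sin u^2)) u := by
    intro u _
    have hcos := Real.abs_cos_le_one u
    have hxval : |t * Real.cos u / A| < 1 := by
      rw [abs_div, _root_.abs_of_nonneg hA0.le, div_lt_one hA0, abs_mul,
        _root_.abs_of_nonneg ht.le]
      nlinarith
    have hx1 : t * Real.cos u / A ≠ -1 := by
      intro h; rw [h] at hxval; norm_num at hxval
    have hx2 : t * Real.cos u / A ≠ 1 := by
      intro h; rw [h] at hxval; norm_num at hxval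
    have hin : HasDerivAt (fun u : ℝ => t * Real.cos u / A) (t * (-Real.sin u) / A) u :=
      ((Real.hasDerivAt_cos u).const_mul t).div_const A
    have harc := (Real.hasDerivAt_arcsin hx1 hx2).comp u hin
    have hfull := harc.const_mul (-(1/t))
    refine hfull.congr_deriv ?_
    have hS0 : (0:ℝ) < Real.sqrt (1 + t^2 * Real.sin u^2) := Real.sqrt_pos.mpr (by positivity)
    have habs : 1 - (t * Real.cos u / A)^2 = (1 + t^2 * Real.sin u^2) / A^2 := by
      have := Real.sin_sq_add_cos_sq u
      field_simp
      nlinarith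
    have hkey : Real.sqrt (1 - (t * Real.cos u / A)^2)
        = Real.sqrt (1 + t^2 * Real.sin u^2) / A := by
      rw [habs, Real.sqrt_div (by positivity), hAdef, Real.sqrt_sq (Real.sqrt_nonneg _), ← hAdef]
    rw [hkey]
    field_simp
  have hcont : Continuous (fun u : ℝ => Real.sin u / Real.sqrt (1 + t^2 * Real.sin u^2)) := by
    apply Real.continuous_sin.div
    · exact Real.continuous_sqrt.comp (by continuity)
    · intro u
      exact (Real.sqrt_pos.mpr (by positivity)).ne'
  rw [intervalIntegral.integral_eq_sub_of_hasDerivAt hderiv (hcont.intervalIntegrable _ _)]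
  rw [Real.cos_pi_div_two, Real.cos_zero]
  rw [show t * 0 / A = 0 by ring, Real.arcsin_zero]
  rw [show t * 1 / A = t / A by ring, hAdef, ← Real.arctan_eq_arcsin]
  ring

lemma K_eq :
    (∫ u in (0:ℝ)..(π/2), Real.arsinh (Real.sin u))
      = ∫ t in (0:ℝ)..1, Real.arctan t / t := by
  have hπ : (0:ℝ) ≤ π/2 := by positivity
  have hcontf : Continuous (fun p : ℝ × ℝ => Real.sin p.2 / Real.sqrt (1 + p.1^2 * Real.sin p.2^2)) := by
    apply Continuous.div
    · exact Real.continuous_sin.comp continuous_snd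
    · apply Real.continuous_sqrt.comp
      exact continuous_const.add (((continuous_pow 2).comp continuous_fst).mul
        ((continuous_pow 2).comp (Real.continuous_sin.comp continuous_snd)))
    · intro p
      exact (Real.sqrt_pos.mpr (by positivity)).ne'
  have hstep1 : (∫ u in (0:ℝ)..(π/2), Real.arsinh (Real.sin u))
      = ∫ u in (0:ℝ)..(π/2), ∫ t in (0:ℝ)..1,
          Real.sin u / Real.sqrt (1 + t^2 * Real.sin u^2) := by
    apply intervalIntegral.integral_congr
    intro u _
    show Real.arsinh (Real.sin u)
      = ∫ t in (0:ℝ)..1, Real.sin u / Real.sqrt (1 + t^2 * Real.sin u^2)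
    rw [← rep_arsinh (Real.sin u)]
    apply intervalIntegral.integral_congr
    intro t _
    show Real.sin u / Real.sqrt (1 + Real.sin u^2 * t^2)
      = Real.sin u / Real.sqrt (1 + t^2 * Real.sin u^2)
    rw [mul_comm (Real.sin u ^2) (t^2)]
  rw [hstep1, intervalIntegral.integral_of_le hπ]
  simp_rw [intervalIntegral.integral_of_le (zero_le_one' ℝ)]
  have hswap := MeasureTheory.integral_integral_swap
    (f := fun u t => Real.sin u / Real.sqrt (1 + t^2 * Real.sin u^2))
    (μ := volume.restrict (Set.Ioc (0:ℝ) (π/2)))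
    (ν := volume.restrict (Set.Ioc (0:ℝ) 1))
    (by
      rw [Measure.prod_restrict]
      have hbig : IntegrableOn
          (Function.uncurry fun u t => Real.sin u / Real.sqrt (1 + t^2 * Real.sin u^2))
          ((Set.Icc (0:ℝ) (π/2)) ×ˢ (Set.Icc (0:ℝ) 1)) (volume.prod volume) := by
        apply ContinuousOn.integrableOn_compact (isCompact_Icc.prod isCompact_Icc)
        exact (hcontf.comp (continuous_snd.prodMk continuous_fst)).continuousOn
      exact hbig.mono_set (Set.prod_mono Set.Ioc_subset_Icc_self Set.Ioc_subset_Icc_self))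
  rw [hswap]
  have hfinal : (∫ t in Set.Ioc (0:ℝ) 1, ∫ u in Set.Ioc (0:ℝ) (π/2),
      Real.sin u / Real.sqrt (1 + t^2 * Real.sin u^2))
      = ∫ t in Set.Ioc (0:ℝ) 1, Real.arctan t / t := by
    apply MeasureTheory.setIntegral_congr_fun measurableSet_Ioc
    intro t ht
    show (∫ u in Set.Ioc (0:ℝ) (π/2), Real.sin u / Real.sqrt (1 + t^2 * Real.sin u^2))
      = Real.arctan t / t
    rw [← intervalIntegral.integral_of_le hπ]
    exact rep_arctan ht.1
  rw [hfinal, ← intervalIntegral.integral_of_le (zero_le_one)]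
lemma arctan_le_self {t : ℝ} (ht : 0 ≤ t) : Real.arctan t ≤ t := by
  rcases eq_or_lt_of_le ht with h | h
  · simp [← h]
  · have h1 : 0 < Real.arctan t := by
      rw [show (0:ℝ) = Real.arctan 0 by simp]
      exact Real.arctan_strictMono h
    have h2 : Real.arctan t < π/2 := Real.arctan_lt_pi_div_two t
    have := Real.lt_tan h1 h2
    rw [Real.tan_arctan] at this
    exact this.le

lemma abs_one_sub_I_mul (t : ℝ) :
    ‖1 - Complex.I * (t:ℝ)‖ = Real.sqrt (1 + t^2) := by
  rw [Complex.norm_def, Complex.normSq_apply]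
  simp [Complex.sub_re, Complex.sub_im, Complex.mul_re, Complex.mul_im]
  ring_nf

lemma arg_one_sub_I_mul (t : ℝ) :
    Complex.arg (1 - Complex.I * (t:ℝ)) = -Real.arctan t := by
  have hre : (1 - Complex.I * (t:ℝ)).re = 1 := by
    simp [Complex.sub_re, Complex.mul_re]
  have him : (1 - Complex.I * (t:ℝ)).im = -t := by
    simp [Complex.sub_im, Complex.mul_im]
  rw [Complex.arg_of_re_nonneg (by rw [hre]; norm_num), him, abs_one_sub_I_mul,
    neg_div, Real.arcsin_neg, Real.arctan_eq_arcsin]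

lemma integrable_li2_integrand :
    IntegrableOn (fun t : ℝ => Complex.log (1 - Complex.I * (t:ℝ)) / (t:ℝ))
      (Set.Ioc (0:ℝ) 1) volume := by
  apply Measure.integrableOn_of_bounded (M := 2) (by simp)
  · apply Measurable.aestronglyMeasurable
    exact (Complex.measurable_log.comp
        (measurable_const.sub (Complex.measurable_ofReal.const_mul Complex.I))).div
      Complex.measurable_ofReal
  · rw [ae_restrict_iff' measurableSet_Ioc]
    refine Filter.Eventually.of_forall (fun t ht => ?_)
    obtain ⟨ht0, ht1⟩ := ht
    rw [norm_div, Complex.norm_real, Real.norm_eq_abs, _root_.abs_of_pos ht0]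
    have hre : |(Complex.log (1 - Complex.I * (t:ℝ))).re| ≤ t/2 := by
      rw [Complex.log_re, abs_one_sub_I_mul]
      have h1 : (1:ℝ) ≤ Real.sqrt (1 + t^2) := by
        nlinarith [Real.sq_sqrt (show (0:ℝ) ≤ 1 + t^2 by positivity),
          Real.sqrt_nonneg (1 + t^2), sq_nonneg (Real.sqrt (1 + t^2) - 1), sq_nonneg t]
      rw [_root_.abs_of_nonneg (Real.log_nonneg h1), Real.log_sqrt (by positivity)]
      have h2 : Real.log (1 + t^2) ≤ t^2 := by
        have := Real.log_le_sub_one_of_pos (show (0:ℝ) < 1 + t^2 by positivity)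
        linarith
      nlinarith
    have him : |(Complex.log (1 - Complex.I * (t:ℝ))).im| ≤ t := by
      rw [Complex.log_im, arg_one_sub_I_mul, abs_neg,
        _root_.abs_of_nonneg (by rw [show (0:ℝ) = Real.arctan 0 by simp]; exact (Real.arctan_strictMono ht0).le)]
      exact arctan_le_self ht0.le
    have habs := Complex.norm_le_abs_re_add_abs_im (Complex.log (1 - Complex.I * (t:ℝ)))
    rw [div_le_iff₀ ht0]
    calc ‖Complex.log (1 - Complex.I * (t:ℝ))‖ ≤ t/2 + t := by linarith
      _ ≤ 2 * t := by linarith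
lemma BW_I_eq : BW Complex.I = ∫ t in (0:ℝ)..1, Real.arctan t / t := by
  unfold BW
  rw [Complex.norm_I, Real.log_one, zero_mul, add_zero]
  unfold Li2
  rw [Complex.neg_im]
  rw [intervalIntegral.integral_of_le zero_le_one]
  have him := integral_im (𝕜 := ℂ) integrable_li2_integrand
  have him' : (∫ t in Set.Ioc (0:ℝ) 1, (Complex.log (1 - Complex.I * (t:ℝ)) / (t:ℝ)).im)
      = (∫ t in Set.Ioc (0:ℝ) 1, Complex.log (1 - Complex.I * (t:ℝ)) / (t:ℝ)).im := him
  rw [← him']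
  have hcong : (∫ t in Set.Ioc (0:ℝ) 1, (Complex.log (1 - Complex.I * (t:ℝ)) / (t:ℝ)).im)
      = ∫ t in Set.Ioc (0:ℝ) 1, -(Real.arctan t / t) := by
    apply MeasureTheory.setIntegral_congr_fun measurableSet_Ioc
    intro t ht
    show (Complex.log (1 - Complex.I * (t:ℝ)) / (t:ℝ)).im = -(Real.arctan t / t)
    rw [Complex.div_ofReal_im, Complex.log_im, arg_one_sub_I_mul, neg_div]
  rw [hcong, MeasureTheory.integral_neg, neg_neg,
    ← intervalIntegral.integral_of_le zero_le_one]

end Aux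

theorem stmt_13 :
    Real.pi * mahler2 (fun x y => x + y - 4 * x * y + x^2 * y + x * y^2)
      = 4 * BW Complex.I := by
  rw [outer_eval, J_eq, K_eq, BW_I_eq]
end

section
/- Let P(x,y) = ax² + bxy + cy² + dx + ey + f be an irreducible degree-two polynomial over ℂ with Δ = b² − 4ac ≠ 0, and let κ satisfy cκ² + bκ + a = 0, κ ≠ 0. Define F(t) = (1/Δ)·(t² + (2cd − be)t + c·(ae² + fb² + cd² − bde − 4acf))/t and G(t) = (1/Δ)·((κt)² + (2ae − bd)(κt) + a·(ae² + fb² + cd² − bde − 4acf))/(κt). Then P(F(t), G(t)) = 0 identically as rational functions of t. -/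
open MvPolynomial
set_option maxHeartbeats 4000000 in
theorem stmt_17 (a b c d e f κ : ℂ)
    (hirr : Irreducible (C a * X 0 ^ 2 + C b * X 0 * X 1 + C c * X 1 ^ 2
      + C d * X 0 + C e * X 1 + C f : MvPolynomial (Fin 2) ℂ))
    (hΔ : b ^ 2 - 4 * a * c ≠ 0)
    (hκ : c * κ ^ 2 + b * κ + a = 0) (hκ0 : κ ≠ 0) :
    ∀ t : ℂ, t ≠ 0 →
      let A := a * e ^ 2 + f * b ^ 2 + c * d ^ 2 - b * d * e - 4 * a * c * f
      let F := (1 / (b ^ 2 - 4 * a * c)) * ((t ^ 2 + (2 * c * d - b * e) * t + c * A) / t)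
      let G := (1 / (b ^ 2 - 4 * a * c)) *
        (((κ * t) ^ 2 + (2 * a * e - b * d) * (κ * t) + a * A) / (κ * t))
      a * F ^ 2 + b * F * G + c * G ^ 2 + d * F + e * G + f = 0 := by
  have ha : a = -(c * κ ^ 2) - b * κ := by linear_combination hκ
  intro t ht A F G
  show a * F ^ 2 + b * F * G + c * G ^ 2 + d * F + e * G + f = 0
  set Δ : ℂ := b ^ 2 - 4 * a * c with hΔdef
  set Nf : ℂ := t ^ 2 + (2 * c * d - b * e) * t + c * A with hNf
  set Ng : ℂ := (κ * t) ^ 2 + (2 * a * e - b * d) * (κ * t) + a * A with hNg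
  have hκt : κ * t ≠ 0 := mul_ne_zero hκ0 ht
  have hM : Δ * (κ * t) ≠ 0 := mul_ne_zero hΔ hκt
  have hF : F * (Δ * t) = Nf := by
    show (1 / Δ) * (Nf / t) * (Δ * t) = Nf
    field_simp
  have hG : G * (Δ * (κ * t)) = Ng := by
    show (1 / Δ) * (Ng / (κ * t)) * (Δ * (κ * t)) = Ng
    field_simp
  have expand : (a * F ^ 2 + b * F * G + c * G ^ 2 + d * F + e * G + f) * (Δ * (κ * t)) ^ 2
      = a * (F * (Δ * t)) ^ 2 * κ ^ 2 + b * (F * (Δ * t)) * (G * (Δ * (κ * t))) * κ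
        + c * (G * (Δ * (κ * t))) ^ 2 + d * (F * (Δ * t)) * (Δ * κ ^ 2 * t)
        + e * (G * (Δ * (κ * t))) * (Δ * κ * t) + f * (Δ * (κ * t)) ^ 2 := by ring
  rw [hF, hG] at expand
  have key : a * Nf ^ 2 * κ ^ 2 + b * Nf * Ng * κ + c * Ng ^ 2 + d * Nf * (Δ * κ ^ 2 * t)
      + e * Ng * (Δ * κ * t) + f * (Δ * (κ * t)) ^ 2 = 0 := by
    subst ha
    simp only [hNf, hNg, hΔdef, A]
    ring
  rw [key] at expand
  exact (mul_eq_zero.1 expand).resolve_right (pow_ne_zero 2 hM)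
end

section
/- Let P(x,y) = c'(a'x + b'y)² + dx + ey + f with Δ' = c'(a'e − b'd) ≠ 0, and define F(t) = (1/Δ')(b't² + et + b'c'f) and G(t) = −(1/Δ')(a't² + dt + a'c'f). Then P(F(t), G(t)) = 0 identically as polynomials in t. -/
theorem stmt_18 (a' b' c' d e f : ℂ) (hc' : c' ≠ 0)
    (hΔ' : c' * (a' * e - b' * d) ≠ 0) :
    ∀ t : ℂ,
      let F := (1 / (c' * (a' * e - b' * d))) * (b' * t ^ 2 + e * t + b' * c' * f)
      let G := -(1 / (c' * (a' * e - b' * d))) * (a' * t ^ 2 + d * t + a' * c' * f)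
      c' * (a' * F + b' * G) ^ 2 + d * F + e * G + f = 0 := by
  intro t F G
  simp only [F, G]
  have h1 : a' * e - b' * d ≠ 0 := right_ne_zero_of_mul hΔ'
  field_simp
  ring
end
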